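/- As n → ∞, the ratio I_{n-k}/I_n of numbers of involutions satisfies I_{n-k}/I_n ~ n^{-k/2}; more precisely, for fixed k, lim_{n→∞} n^{k/2} · I_{n-k}/I_n = 1. -/

import Mathlib

open Filter

/-- The number of involutions in the symmetric group `S_n`. -/
noncomputable def numInvolutions (n : ℕ) : ℕ :=
  Nat.card {σ : Equiv.Perm (Fin n) // σ * σ = 1}

section Aux


open Equiv Filter

namespace InvoAux

variable {α β : Type*}

lemma permCongr_mul (e : α ≃ β) (σ τ : Perm α) :
    e.permCongr (σ * τ) = e.permCongr σ * e.permCongr τ := by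
  ext x; simp [Perm.mul_apply]

lemma permCongr_one (e : α ≃ β) : e.permCongr (1 : Perm α) = 1 := by
  ext x; simp

def invoCongr (e : α ≃ β) :
    {σ : Perm α // σ * σ = 1} ≃ {σ : Perm β // σ * σ = 1} :=
  e.permCongr.subtypeEquiv fun σ => by
    constructor
    · intro h; rw [← permCongr_mul, h, permCongr_one]
    · intro h
      rw [← permCongr_mul, ← permCongr_one e] at h
      exact e.permCongr.injective h

variable [DecidableEq α]

def fixEquiv (a : α) :
    {σ : Perm α // σ * σ = 1 ∧ σ a = a} ≃
      {σ : Perm {x : α // x ≠ a} // σ * σ = 1} where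
  toFun := fun ⟨σ, hσ, ha⟩ =>
    ⟨σ.subtypePerm (fun x => ⟨fun hx h => hx (h ▸ ha),
        fun hx h => hx (σ.injective (h.trans ha.symm))⟩), by
      have hfix : ∀ y, σ (σ y) = y := fun y => by
        have := congrArg (fun f : Perm α => f y) hσ
        simpa [Perm.mul_apply] using this
      ext x
      simp [Perm.mul_apply, Perm.subtypePerm_apply, hfix, hσ]⟩
  invFun := fun ⟨τ, hτ⟩ =>
    ⟨Perm.ofSubtype τ, by rw [← map_mul, hτ, map_one],
      Perm.ofSubtype_apply_of_not_mem τ (not_not_intro rfl)⟩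
  left_inv := fun ⟨σ, hσ, ha⟩ => Subtype.ext <| by
    exact Perm.ofSubtype_subtypePerm _ (fun x hx => fun h => hx (h ▸ ha))
  right_inv := fun ⟨τ, hτ⟩ => Subtype.ext <| Perm.subtypePerm_ofSubtype τ

end InvoAux

open Equiv Filter

namespace InvoAux2

variable {α : Type*} [DecidableEq α]

omit [DecidableEq α] in
lemma optionCongr_mul (σ τ : Perm α) :
    (σ * τ).optionCongr = σ.optionCongr * τ.optionCongr := by
  ext y; cases y <;> simp [Perm.mul_apply]

lemma swap_optionCongr_comm {a : α} {τ : Perm α} (ha : τ a = a) :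
    swap (none : Option α) (some a) * τ.optionCongr
      = τ.optionCongr * swap none (some a) := by
  ext y
  rcases y with - | b
  · simp [Perm.mul_apply, ha]
  · by_cases hb : b = a
    · simp [Perm.mul_apply, hb, ha]
    · have h1 : τ b ≠ a := fun hc => hb (τ.injective (hc.trans ha.symm))
      simp [Perm.mul_apply, swap_apply_def, hb, h1]

lemma regroup {a : α} {τ : Perm α} (ha : τ a = a) :
    (swap (none : Option α) (some a) * τ.optionCongr)
        * (swap none (some a) * τ.optionCongr)
      = (swap none (some a) * swap none (some a))
        * (τ.optionCongr * τ.optionCongr) := by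
  rw [mul_assoc, ← mul_assoc τ.optionCongr (swap none (some a)) τ.optionCongr,
    ← swap_optionCongr_comm ha, mul_assoc (swap none (some a)) τ.optionCongr
      τ.optionCongr, ← mul_assoc]

lemma key (x : Option α) (τ : Perm α) :
    (τ * τ = 1 ∧ ∀ a, x = some a → τ a = a) ↔
      (swap none x * τ.optionCongr) * (swap none x * τ.optionCongr) = 1 := by
  cases x with
  | none =>
    rw [swap_self, ← Perm.one_def, one_mul, ← optionCongr_mul]
    constructor
    · rintro ⟨h, -⟩; rw [h, optionCongr_one]
    · intro h
      refine ⟨Equiv.optionCongr_injective ?_, by simp⟩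
      rw [h, optionCongr_one]
  | some a =>
    constructor
    · rintro ⟨h, hfixa⟩
      have ha : τ a = a := hfixa a rfl
      rw [regroup ha, swap_mul_self, one_mul, ← optionCongr_mul, h, optionCongr_one]
    · intro h
      have hnone := congrArg (fun f : Perm (Option α) => f none) h
      simp only [Perm.mul_apply, optionCongr_apply, Option.map_none, swap_apply_left,
        Option.map_some, Perm.one_apply] at hnone
      have ha : τ a = a := by
        by_contra hne
        rw [swap_apply_of_ne_of_ne (by simp) (by simpa using hne)] at hnone
        exact Option.some_ne_none _ hnone
      refine ⟨?_, fun b hb => by cases hb; exact ha⟩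
      rw [regroup ha, swap_mul_self, one_mul, ← optionCongr_mul] at h
      apply Equiv.optionCongr_injective
      rw [h, optionCongr_one]

end InvoAux2

open Equiv Filter


namespace InvoAux3

variable {α : Type*} [DecidableEq α]

def sigmaOptionEquiv (F : Option α → Type*) :
    (Σ x : Option α, F x) ≃ F none ⊕ Σ a : α, F (some a) where
  toFun := fun ⟨x, y⟩ =>
    match x, y with
    | none, y => Sum.inl y
    | some a, y => Sum.inr ⟨a, y⟩
  invFun := fun s =>
    match s with
    | Sum.inl y => ⟨none, y⟩
    | Sum.inr ⟨a, y⟩ => ⟨some a, y⟩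
  left_inv := by rintro ⟨(- | a), y⟩ <;> rfl
  right_inv := by rintro (y | ⟨a, y⟩) <;> rfl

def optionInvoEquiv :
    {σ : Perm (Option α) // σ * σ = 1} ≃
      {σ : Perm α // σ * σ = 1} ⊕ Σ a : α, {σ : Perm α // σ * σ = 1 ∧ σ a = a} :=
  calc
    {σ : Perm (Option α) // σ * σ = 1}
      ≃ {p : Option α × Perm α //
          p.2 * p.2 = 1 ∧ ∀ a, p.1 = some a → p.2 a = a} :=
        (Perm.decomposeOption.symm.subtypeEquiv fun p => by
          simpa using InvoAux2.key p.1 p.2).symm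
    _ ≃ Σ x : Option α, {τ : Perm α // τ * τ = 1 ∧ ∀ a, x = some a → τ a = a} :=
        Equiv.subtypeProdEquivSigmaSubtype
          (fun (x : Option α) (τ : Perm α) => τ * τ = 1 ∧ ∀ a, x = some a → τ a = a)
    _ ≃ {τ : Perm α // τ * τ = 1 ∧ ∀ a, (none : Option α) = some a → τ a = a}
        ⊕ Σ a : α, {τ : Perm α // τ * τ = 1 ∧ ∀ b, some a = some b → τ b = b} :=
        sigmaOptionEquiv _
    _ ≃ {σ : Perm α // σ * σ = 1} ⊕ Σ a : α, {σ : Perm α // σ * σ = 1 ∧ σ a = a} := by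
        refine Equiv.sumCongr (Equiv.subtypeEquivRight fun τ => by simp)
          (Equiv.sigmaCongrRight fun a => Equiv.subtypeEquivRight fun τ => by
            constructor
            · rintro ⟨h1, h2⟩; exact ⟨h1, h2 a rfl⟩
            · rintro ⟨h1, h2⟩; exact ⟨h1, fun b hb => by cases hb; exact h2⟩)

end InvoAux3

namespace InvoAux3

lemma card_ne (n : ℕ) (a : Fin (n+1)) :
    Fintype.card {x : Fin (n+1) // x ≠ a} = n := by
  have : Fintype.card {x : Fin (n+1) // ¬ x = a} = _ :=
    Fintype.card_subtype_compl (fun x : Fin (n+1) => x = a)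
  simpa [Fintype.card_subtype_eq] using this

lemma numInvolutions_rec (n : ℕ) :
    numInvolutions (n + 2) = numInvolutions (n + 1) + (n + 1) * numInvolutions n := by
  classical
  have e3 : ∀ a : Fin (n+1),
      {σ : Perm (Fin (n+1)) // σ * σ = 1 ∧ σ a = a} ≃ {σ : Perm (Fin n) // σ * σ = 1} :=
    fun a => (InvoAux.fixEquiv a).trans
      (InvoAux.invoCongr (Fintype.equivFinOfCardEq (card_ne n a)))
  have E : {σ : Perm (Fin (n+2)) // σ * σ = 1} ≃
      {σ : Perm (Fin (n+1)) // σ * σ = 1} ⊕ (Fin (n+1) × {σ : Perm (Fin n) // σ * σ = 1}) :=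
    ((InvoAux.invoCongr (finSuccEquiv (n+1))).trans optionInvoEquiv).trans
      (Equiv.sumCongr (Equiv.refl _)
        ((Equiv.sigmaCongrRight e3).trans (Equiv.sigmaEquivProd _ _)))
  rw [numInvolutions, Nat.card_congr E, Nat.card_sum, Nat.card_prod,
    Nat.card_eq_fintype_card (α := Fin (n+1)), Fintype.card_fin]
  rfl

lemma numInvolutions_pos (n : ℕ) : 0 < numInvolutions n := by
  rw [numInvolutions]
  have : Nonempty {σ : Perm (Fin n) // σ * σ = 1} := ⟨⟨1, one_mul 1⟩⟩
  exact Nat.card_pos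

lemma numInvolutions_zero : numInvolutions 0 = 1 := by
  rw [numInvolutions]
  haveI : Subsingleton {σ : Perm (Fin 0) // σ * σ = 1} :=
    ⟨fun a b => Subtype.ext (by ext x; exact absurd x.2 (by omega))⟩
  haveI : Nonempty {σ : Perm (Fin 0) // σ * σ = 1} := ⟨⟨1, one_mul 1⟩⟩
  exact Nat.card_eq_one_iff_unique.mpr ⟨‹_›, ‹_›⟩

lemma numInvolutions_one : numInvolutions 1 = 1 := by
  rw [numInvolutions]
  haveI : Subsingleton {σ : Perm (Fin 1) // σ * σ = 1} :=
    ⟨fun a b => Subtype.ext (by ext x; omega)⟩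
  haveI : Nonempty {σ : Perm (Fin 1) // σ * σ = 1} := ⟨⟨1, one_mul 1⟩⟩
  exact Nat.card_eq_one_iff_unique.mpr ⟨‹_›, ‹_›⟩

end InvoAux3


namespace InvoAna

open InvoAux3

local notation "J" => numInvolutions

lemma Jpos (n : ℕ) : (0 : ℝ) < J n := by exact_mod_cast numInvolutions_pos n

lemma sqrt_bounds (n : ℕ) :
    Real.sqrt ((n : ℝ) + 1) * J n ≤ (J (n+1) : ℝ) ∧
      (J (n+1) : ℝ) ≤ (Real.sqrt ((n : ℝ) + 1) + 1) * J n := by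
  induction n with
  | zero =>
    simp [numInvolutions_zero, numInvolutions_one]
  | succ n ih =>
    obtain ⟨hl, hu⟩ := ih
    set s := Real.sqrt ((n : ℝ) + 1) with hs
    set u := Real.sqrt ((n : ℝ) + 1 + 1) with hudef
    have hs0 : 0 ≤ s := Real.sqrt_nonneg _
    have hu0 : 0 ≤ u := Real.sqrt_nonneg _
    have hs2 : s ^ 2 = (n : ℝ) + 1 := Real.sq_sqrt (by positivity)
    have hu2 : u ^ 2 = (n : ℝ) + 2 := by
      rw [hudef]; rw [Real.sq_sqrt (by positivity)]; ring
    have hs1 : 1 ≤ s := by nlinarith [hs2, hs0]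
    have hu1 : 1 ≤ u := by nlinarith [hu2, hu0]
    have hsu : s ≤ u := Real.sqrt_le_sqrt (by linarith)
    have hrec : (J (n+2) : ℝ) = J (n+1) + ((n : ℝ) + 1) * J n := by
      have := numInvolutions_rec n
      push_cast [this]; ring
    have hJn := Jpos n
    have hJn1 := Jpos (n+1)
    have hcast : ((n : ℝ) + 1 + 1) = (n : ℝ) + 2 := by ring
    constructor
    · -- lower bound: u * J(n+1) ≤ J(n+2)
      push_cast
      show u * (J (n+1) : ℝ) ≤ (J (n+2) : ℝ)
      rw [hrec]
      have key : (u - 1) * (s + 1) ≤ (n : ℝ) + 1 := by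
        nlinarith [sq_nonneg (u - s), sq_nonneg (u - s - 1/2)]
      have h2 : (u - 1) * (J (n+1) : ℝ) ≤ ((u - 1) * (s + 1)) * J n := by
        have := mul_le_mul_of_nonneg_left hu (by linarith : (0:ℝ) ≤ u - 1)
        nlinarith
      nlinarith [mul_le_mul_of_nonneg_right key hJn.le]
    · push_cast
      show (J (n+2) : ℝ) ≤ (u + 1) * J (n+1)
      rw [hrec]
      have h1 : ((n : ℝ) + 1) * J n ≤ s * J (n+1) := by
        have := mul_le_mul_of_nonneg_left hl hs0
        nlinarith
      nlinarith [mul_le_mul_of_nonneg_right hsu hJn1.le]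

end InvoAna

namespace InvoAna

local notation "J" => numInvolutions

lemma tendsto_sqrt_ratio :
    Tendsto (fun n : ℕ => Real.sqrt ((n : ℝ) + 1) * J n / J (n+1)) atTop (nhds 1) := by
  have hup : ∀ n : ℕ, Real.sqrt ((n : ℝ) + 1) * J n / J (n+1) ≤ 1 := fun n =>
    div_le_one_of_le₀ (sqrt_bounds n).1 (Jpos (n+1)).le
  have hlow : ∀ n : ℕ,
      Real.sqrt ((n : ℝ) + 1) / (Real.sqrt ((n : ℝ) + 1) + 1) ≤
        Real.sqrt ((n : ℝ) + 1) * J n / J (n+1) := by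
    intro n
    have h0 : (0:ℝ) < Real.sqrt ((n : ℝ) + 1) + 1 := by positivity
    have h1 : Real.sqrt ((n : ℝ) + 1) / (Real.sqrt ((n : ℝ) + 1) + 1)
        = Real.sqrt ((n : ℝ) + 1) * J n / ((Real.sqrt ((n : ℝ) + 1) + 1) * J n) := by
      rw [mul_div_mul_right _ _ (Jpos n).ne']
    rw [h1]
    apply div_le_div_of_nonneg_left _ (Jpos (n+1)) (sqrt_bounds n).2
    positivity
  have hsq : Tendsto (fun n : ℕ => Real.sqrt ((n : ℝ) + 1)) atTop atTop := by
    refine tendsto_atTop.2 fun b => ?_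
    rcases le_or_gt b 0 with hb | hb
    · exact Eventually.of_forall fun n => hb.trans (Real.sqrt_nonneg _)
    · filter_upwards [eventually_ge_atTop ⌈b^2⌉₊] with n hn
      have h2 : b^2 ≤ (n:ℝ) + 1 := by
        have h3 : (⌈b^2⌉₊ : ℝ) ≤ (n : ℝ) := by exact_mod_cast hn
        have := Nat.le_ceil (b^2)
        linarith
      calc b = Real.sqrt (b^2) := (Real.sqrt_sq hb.le).symm
      _ ≤ Real.sqrt ((n:ℝ)+1) := Real.sqrt_le_sqrt h2
  have hsq1 : Tendsto (fun n : ℕ => Real.sqrt ((n : ℝ) + 1) + 1) atTop atTop :=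
    tendsto_atTop_add_const_right _ _ hsq
  have hinv : Tendsto (fun n : ℕ => (Real.sqrt ((n : ℝ) + 1) + 1)⁻¹) atTop (nhds 0) :=
    hsq1.inv_tendsto_atTop
  have hlowlim : Tendsto
      (fun n : ℕ => Real.sqrt ((n : ℝ) + 1) / (Real.sqrt ((n : ℝ) + 1) + 1))
      atTop (nhds 1) := by
    have : Tendsto (fun n : ℕ => 1 - (Real.sqrt ((n : ℝ) + 1) + 1)⁻¹) atTop (nhds 1) := by
      simpa using tendsto_const_nhds.sub hinv
    refine this.congr fun n => ?_
    have h0 : (0:ℝ) < Real.sqrt ((n : ℝ) + 1) + 1 := by positivity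
    field_simp
    ring
  exact tendsto_of_tendsto_of_tendsto_of_le_of_le hlowlim tendsto_const_nhds hlow hup

lemma tendsto_Q (k : ℕ) :
    Tendsto (fun n : ℕ => ((n + k : ℕ) : ℝ) ^ ((k : ℝ) / 2) * J n / J (n + k))
      atTop (nhds 1) := by
  induction k with
  | zero =>
    refine Tendsto.congr (fun n => ?_) tendsto_const_nhds
    simp [div_self (Jpos n).ne']
  | succ k ih =>
    have A : Tendsto (fun n : ℕ =>
        Real.sqrt (((n + k : ℕ) : ℝ) + 1) * J (n + k) / J (n + k + 1)) atTop (nhds 1) :=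
      tendsto_sqrt_ratio.comp (tendsto_add_atTop_nat k)
    have base : Tendsto (fun n : ℕ => ((n + k + 1 : ℕ) : ℝ) / ((n + k : ℕ) : ℝ))
        atTop (nhds 1) := by
      have t1 : Tendsto (fun n : ℕ => ((n : ℝ) + k)) atTop atTop :=
        tendsto_atTop_add_const_right _ _ tendsto_natCast_atTop_atTop
      have t2 : Tendsto (fun n : ℕ => 1 + ((n : ℝ) + k)⁻¹) atTop (nhds 1) := by
        simpa using tendsto_const_nhds.add t1.inv_tendsto_atTop
      refine t2.congr' ?_
      filter_upwards [eventually_ge_atTop 1] with n hn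
      have h0 : ((n : ℝ) + k) ≠ 0 := by
        have : (1:ℝ) ≤ (n:ℝ) := by exact_mod_cast hn
        positivity
      push_cast
      field_simp
    have R : Tendsto (fun n : ℕ =>
        (((n + k + 1 : ℕ) : ℝ) / ((n + k : ℕ) : ℝ)) ^ ((k : ℝ) / 2)) atTop (nhds 1) := by
      have hc : ContinuousAt (fun x : ℝ => x ^ ((k : ℝ) / 2)) 1 :=
        Real.continuousAt_rpow_const 1 _ (Or.inl one_ne_zero)
      have := hc.tendsto.comp base
      simpa [Real.one_rpow, Function.comp_def] using this
    have prod := (A.mul R).mul ih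
    rw [show (1:ℝ) * 1 * 1 = 1 by ring] at prod
    refine prod.congr' ?_
    filter_upwards [eventually_ge_atTop 1] with n hn
    have hn1 : (1:ℝ) ≤ (n:ℝ) := by exact_mod_cast hn
    have hx : (0:ℝ) < ((n + k : ℕ) : ℝ) := by push_cast; linarith
    have hx1 : (0:ℝ) < ((n + k + 1 : ℕ) : ℝ) := by push_cast; linarith
    have hcast : ((n + k + 1 : ℕ) : ℝ) = ((n + k : ℕ) : ℝ) + 1 := by push_cast; ring
    set x : ℝ := ((n + k : ℕ) : ℝ) with hxdef
    have hsqrt : Real.sqrt (x + 1) = (x + 1) ^ ((1:ℝ)/2) := Real.sqrt_eq_rpow _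
    have hsplit : (x + 1) ^ (((k:ℝ) + 1) / 2)
        = (x + 1) ^ ((1:ℝ)/2) * (x + 1) ^ ((k:ℝ)/2) := by
      rw [← Real.rpow_add (by linarith)]
      norm_num
      ring_nf
    have hdiv : ((x + 1) / x) ^ ((k : ℝ)/2) = (x + 1) ^ ((k:ℝ)/2) / x ^ ((k:ℝ)/2) :=
      Real.div_rpow (by linarith) hx.le _
    have hw : (0:ℝ) < x ^ ((k:ℝ)/2) := Real.rpow_pos_of_pos hx _
    have hc1 : ((n + (k+1) : ℕ) : ℝ) = x + 1 := by rw [hxdef]; push_cast; ring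
    have hc2 : ((k+1 : ℕ) : ℝ) = (k:ℝ) + 1 := by push_cast; ring
    have hJc : J (n + (k+1)) = J (n + k + 1) := rfl
    rw [hc1, hc2, hJc, hcast, hsqrt, hdiv, hsplit]
    have ha := (Jpos (n+k)).ne'
    have hb := (Jpos (n+k+1)).ne'
    have hcne := (Jpos n).ne'
    field_simp

theorem main (k : ℕ) :
    Tendsto
      (fun n : ℕ =>
        (n : ℝ) ^ ((k : ℝ) / 2) * (numInvolutions (n - k) : ℝ) / (numInvolutions n : ℝ))
      atTop (nhds 1) := by
  have h := (tendsto_Q k).comp (tendsto_sub_atTop_nat k)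
  refine h.congr' ?_
  filter_upwards [eventually_ge_atTop k] with n hn
  have h1 : n - k + k = n := Nat.sub_add_cancel hn
  simp only [Function.comp_apply]
  rw [h1]

end InvoAna


end Aux

theorem involution_ratio_asymptotics (k : ℕ) :
    Tendsto
      (fun n : ℕ =>
        (n : ℝ) ^ ((k : ℝ) / 2) * (numInvolutions (n - k) : ℝ) / (numInvolutions n : ℝ))
      atTop (nhds 1) := by
  exact InvoAna.main k
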